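/- For any partition λ, let v_k(λ) (k ∈ ℤ) be the number of boxes of the Young diagram of λ of residue k. Then Σ_{k∈ℤ} (v_k(λ) − v_{k+1}(λ))² = 2 v_0(λ). Equivalently, for the A_∞ Cartan matrix C (C_{ij} = 2δ_{ij} − δ_{i−1,j} − δ_{i+1,j}), one has 2 v_0(λ) − v(λ)·C v(λ) = 0, so the quiver variety 𝔐(v^λ) is 0-dimensional. -/

import Mathlib

/-- A partition: a non-increasing, eventually-zero sequence of non-negative integers.
`part k` is the `(k+1)`-st part `λ_{k+1}`. -/
structure PartitionSeq : Type where
  part : ℕ → ℕ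
  mono : ∀ k, part (k + 1) ≤ part k
  ev_zero : ∃ N : ℕ, ∀ k, N ≤ k → part k = 0

namespace PartitionSeq

/-- The Young diagram of a partition: the box `b = (j, k)` in column `j ≥ 0` and row
`k ≥ 0` belongs to the diagram iff `j < λ_{k+1}`. -/
def diagram (lam : PartitionSeq) : Set (ℕ × ℕ) := {b | b.1 < lam.part b.2}

/-- The size `|λ| = Σ_i λ_i` of a partition. -/
noncomputable def size (lam : PartitionSeq) : ℕ := ∑ᶠ k : ℕ, lam.part k

end PartitionSeq

/-- The residue `j - k` of the box `b = (j, k)`. -/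
def boxResidue (b : ℕ × ℕ) : ℤ := (b.1 : ℤ) - (b.2 : ℤ)

/-- `v_i(λ)`: the number of boxes of the Young diagram of `λ` of residue `i`. -/
noncomputable def boxCount (lam : PartitionSeq) (i : ℤ) : ℕ :=
  {b ∈ lam.diagram | boxResidue b = i}.ncard

namespace PartitionSeqAux

variable (lam : PartitionSeq)

lemma part_antitone : Antitone lam.part := antitone_nat_of_succ_le lam.mono

/-- A bound beyond which all parts are zero. -/
noncomputable def NN : ℕ := lam.ev_zero.choose

lemma part_NN : ∀ k, NN lam ≤ k → lam.part k = 0 := lam.ev_zero.choose_spec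

/-- The set of rows having a box of residue `i`. -/
noncomputable def S (i : ℤ) : Finset ℕ :=
  (Finset.range (NN lam)).filter
    (fun k => 0 ≤ i + (k : ℤ) ∧ (i + (k : ℤ)).toNat < lam.part k)

lemma mem_S {i : ℤ} {k : ℕ} :
    k ∈ S lam i ↔ k < NN lam ∧ 0 ≤ i + (k : ℤ) ∧ (i + (k : ℤ)).toNat < lam.part k := by
  simp [S, Finset.mem_filter, Finset.mem_range, and_assoc]

lemma boxCount_eq (i : ℤ) : boxCount lam i = (S lam i).card := by
  have hinj : Function.Injective (fun k : ℕ => ((i + (k : ℤ)).toNat, k)) := by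
    intro a b h
    simpa using congrArg Prod.snd h
  have hset : {b ∈ lam.diagram | boxResidue b = i}
      = (fun k : ℕ => ((i + (k : ℤ)).toNat, k)) '' (S lam i : Set ℕ) := by
    ext ⟨j, k⟩
    constructor
    · rintro ⟨hd, hr⟩
      have hd' : j < lam.part k := hd
      have hr' : (j : ℤ) - (k : ℤ) = i := hr
      refine ⟨k, ?_, ?_⟩
      · have hN : k < NN lam := by
          by_contra h
          have := part_NN lam k (by omega)
          omega
        simp only [Finset.coe_filter, Set.mem_setOf_eq, S, Finset.mem_range]
        refine ⟨hN, by omega, by omega⟩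
      · simp only []
        have : (i + (k : ℤ)).toNat = j := by omega
        rw [this]
    · rintro ⟨k, hk, heq⟩
      simp only [Prod.mk.injEq] at heq
      obtain ⟨h1, rfl⟩ := heq
      simp only [Finset.mem_coe, mem_S] at hk
      obtain ⟨hN, h0, hlt⟩ := hk
      constructor
      · show j < lam.part k
        omega
      · show (j : ℤ) - (k : ℤ) = i
        omega
  rw [boxCount, hset, Set.ncard_image_of_injective _ hinj, Set.ncard_coe_finset]

lemma S_empty_of_ge {i : ℤ} (h : (lam.part 0 : ℤ) ≤ i) : S lam i = ∅ := by
  ext k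
  simp only [mem_S, Finset.notMem_empty, iff_false, not_and]
  intro hN h0
  have := part_antitone lam (Nat.zero_le k)
  omega

lemma S_empty_of_le {i : ℤ} (h : i ≤ -(NN lam : ℤ)) : S lam i = ∅ := by
  ext k
  simp only [mem_S, Finset.notMem_empty, iff_false, not_and]
  intro hN h0
  omega

lemma card_A_le_one (i : ℤ) : (S lam i \ S lam (i + 1)).card ≤ 1 := by
  rw [Finset.card_le_one]
  intro a ha b hb
  simp only [Finset.mem_sdiff, mem_S, not_and, not_lt] at ha hb
  obtain ⟨⟨haN, ha0, halt⟩, ha'⟩ := ha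
  obtain ⟨⟨hbN, hb0, hblt⟩, hb'⟩ := hb
  have ha'' := ha' (by omega) (by omega)
  have hb'' := hb' (by omega) (by omega)
  rcases le_total a b with h | h
  · have := part_antitone lam h; omega
  · have := part_antitone lam h; omega

lemma card_B_le_one (i : ℤ) : (S lam (i + 1) \ S lam i).card ≤ 1 := by
  rw [Finset.card_le_one]
  intro a ha b hb
  simp only [Finset.mem_sdiff, mem_S, not_and, not_lt] at ha hb
  obtain ⟨⟨haN, ha0, halt⟩, ha'⟩ := ha
  obtain ⟨⟨hbN, hb0, hblt⟩, hb'⟩ := hb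
  -- from non-membership in S i, derive i + a < 0
  have hA : i + (a : ℤ) < 0 := by
    by_contra h
    exact absurd (ha' (by omega) (by omega)) (by omega)
  have hB : i + (b : ℤ) < 0 := by
    by_contra h
    exact absurd (hb' (by omega) (by omega)) (by omega)
  omega

lemma B_empty_of_nonneg {i : ℤ} (h : 0 ≤ i) : S lam (i + 1) \ S lam i = ∅ := by
  ext k
  simp only [Finset.mem_sdiff, mem_S, Finset.notMem_empty, iff_false]
  rintro ⟨⟨hN, h0, hlt⟩, hni⟩
  exact hni ⟨hN, by omega, by omega⟩

lemma B_nonempty {i : ℤ} (h : i ≤ -1) (hA : (S lam i \ S lam (i + 1)).Nonempty) :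
    (S lam (i + 1) \ S lam i).Nonempty := by
  obtain ⟨k, hk⟩ := hA
  simp only [Finset.mem_sdiff, mem_S] at hk
  obtain ⟨⟨hN, h0, hlt⟩, _⟩ := hk
  refine ⟨(-1 - i).toNat, ?_⟩
  have hk0le : (-1 - i).toNat ≤ k := by omega
  have hpart : 1 ≤ lam.part ((-1 - i).toNat) :=
    le_trans (by omega) (part_antitone lam hk0le)
  have hk0N : (-1 - i).toNat < NN lam := by
    by_contra hcon
    have := part_NN lam _ (by omega : NN lam ≤ (-1 - i).toNat)
    omega
  simp only [Finset.mem_sdiff, mem_S, not_and, not_lt]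
  refine ⟨⟨hk0N, by omega, by omega⟩, ?_⟩
  intro _ h0'
  omega

/-- The difference of consecutive counts, as an integer. -/
lemma D_eq (i : ℤ) :
    ((S lam i).card : ℤ) - (S lam (i + 1)).card
      = ((S lam i \ S lam (i + 1)).card : ℤ) - (S lam (i + 1) \ S lam i).card := by
  have h1 := Finset.card_sdiff_add_card_inter (S lam i) (S lam (i + 1))
  have h2 := Finset.card_sdiff_add_card_inter (S lam (i + 1)) (S lam i)
  rw [Finset.inter_comm] at h2
  omega

lemma sq_eq_of_nonneg {i : ℤ} (h : 0 ≤ i) :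
    (((S lam i).card : ℤ) - (S lam (i + 1)).card) ^ 2
      = ((S lam i).card : ℤ) - (S lam (i + 1)).card := by
  have hD := D_eq lam i
  have hA := card_A_le_one lam i
  have hB : (S lam (i + 1) \ S lam i).card = 0 := by
    rw [B_empty_of_nonneg lam h]; simp
  have : ((S lam i).card : ℤ) - (S lam (i + 1)).card = 0 ∨
      ((S lam i).card : ℤ) - (S lam (i + 1)).card = 1 := by omega
  rcases this with h' | h'
  · linear_combination (((S lam i).card : ℤ) - (S lam (i + 1)).card - 1) * h'
  · linear_combination (((S lam i).card : ℤ) - (S lam (i + 1)).card) * h'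

lemma sq_eq_of_neg {i : ℤ} (h : i ≤ -1) :
    (((S lam i).card : ℤ) - (S lam (i + 1)).card) ^ 2
      = ((S lam (i + 1)).card : ℤ) - (S lam i).card := by
  have hD := D_eq lam i
  have hA := card_A_le_one lam i
  have hB := card_B_le_one lam i
  have himp : 1 ≤ (S lam i \ S lam (i + 1)).card → 1 ≤ (S lam (i + 1) \ S lam i).card := by
    intro h1
    exact Finset.card_pos.mpr (B_nonempty lam h (Finset.card_pos.mp h1))
  have : ((S lam i).card : ℤ) - (S lam (i + 1)).card = 0 ∨
      ((S lam i).card : ℤ) - (S lam (i + 1)).card = -1 := by omega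
  rcases this with h' | h'
  · linear_combination (((S lam i).card : ℤ) - (S lam (i + 1)).card + 1) * h'
  · linear_combination (((S lam i).card : ℤ) - (S lam (i + 1)).card) * h'

end PartitionSeqAux

open PartitionSeqAux

/-- for any partition `λ`, `Σ_{k∈ℤ} (v_k(λ) − v_{k+1}(λ))² = 2 v_0(λ)`;
equivalently `2 v_0(λ) − v(λ) · C v(λ) = 0` for the `A_∞` Cartan matrix `C`, so the
quiver variety `𝔐(v^λ)` is 0-dimensional. -/
theorem boxCount_cartan (lam : PartitionSeq) :
    ∑ᶠ i : ℤ, ((boxCount lam i : ℤ) - (boxCount lam (i + 1) : ℤ)) ^ 2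
      = 2 * (boxCount lam 0 : ℤ) := by

  set g : ℤ → ℤ := fun i => ((S lam i).card : ℤ) with hg
  have hbc : ∀ i : ℤ, (boxCount lam i : ℤ) = g i := by
    intro i; simp [hg, boxCount_eq lam i]
  set f : ℤ → ℤ := fun i => (g i - g (i + 1)) ^ 2 with hf
  have hmain : ∑ᶠ i : ℤ, f i = 2 * g 0 := by
    set M : ℕ := NN lam + lam.part 0 + 1 with hM
    have hzero : ∀ i : ℤ, (M : ℤ) ≤ i ∨ i ≤ -(M : ℤ) → g i = 0 := by
      intro i hi
      rcases hi with hi | hi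
      · have h' : (lam.part 0 : ℤ) ≤ i := by rw [hM] at hi; push_cast at hi; omega
        simp [hg, S_empty_of_ge lam h']
      · have h' : i ≤ -(NN lam : ℤ) := by rw [hM] at hi; push_cast at hi; omega
        simp [hg, S_empty_of_le lam h']
    have hsupp : Function.support f ⊆
        ((Finset.range (M + M)).image (fun j : ℕ => (j : ℤ) - M) : Finset ℤ) := by
      intro i hi
      simp only [Function.mem_support, hf] at hi
      have hne : g i ≠ 0 ∨ g (i + 1) ≠ 0 := by
        by_contra hcon
        push_neg at hcon
        apply hi
        rw [hcon.1, hcon.2]; ring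
      have hrange : -(M : ℤ) ≤ i ∧ i ≤ (M : ℤ) - 1 := by
        rcases hne with hne | hne
        · constructor
          · by_contra hcon; exact hne (hzero i (Or.inr (by omega)))
          · by_contra hcon; exact hne (hzero i (Or.inl (by omega)))
        · constructor
          · by_contra hcon; exact hne (hzero (i + 1) (Or.inr (by omega)))
          · by_contra hcon; exact hne (hzero (i + 1) (Or.inl (by omega)))
      simp only [Finset.coe_image, Set.mem_image, Finset.mem_coe, Finset.mem_range]
      exact ⟨(i + M).toNat, by omega, by omega⟩
    rw [finsum_eq_sum_of_support_subset f hsupp]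
    rw [Finset.sum_image (by intro a _ b _ h; have h' : (a : ℤ) - M = (b : ℤ) - M := h; omega)]
    rw [Finset.sum_range_add (fun j => f ((j : ℤ) - M)) M M]
    have hneg : ∑ j ∈ Finset.range M, f ((j : ℤ) - M) = g 0 := by
      have : ∀ j ∈ Finset.range M, f ((j : ℤ) - M)
          = (fun j : ℕ => g ((j : ℤ) - M)) (j + 1) - (fun j : ℕ => g ((j : ℤ) - M)) j := by
        intro j hj
        simp only [Finset.mem_range] at hj
        simp only [hf]
        have h1 : ((j : ℤ) - M) + 1 = ((j + 1 : ℕ) : ℤ) - M := by push_cast; ring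
        rw [← h1]
        exact sq_eq_of_neg lam (by omega)
      rw [Finset.sum_congr rfl this, Finset.sum_range_sub (fun j : ℕ => g ((j : ℤ) - M)) M]
      have h0 : ((M : ℤ) - M) = 0 := by ring
      have hmm : ((0 : ℕ) : ℤ) - M = -(M : ℤ) := by push_cast; ring
      rw [h0, hmm, hzero (-(M : ℤ)) (Or.inr le_rfl), sub_zero]
    have hpos : ∑ j ∈ Finset.range M, f ((M + j : ℕ) - (M : ℤ)) = g 0 := by
      have : ∀ j ∈ Finset.range M, f (((M + j : ℕ) : ℤ) - M)
          = (fun j : ℕ => g (j : ℤ)) j - (fun j : ℕ => g (j : ℤ)) (j + 1) := by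
        intro j hj
        have h1 : ((M + j : ℕ) : ℤ) - M = (j : ℤ) := by push_cast; ring
        rw [h1]
        simp only [hf]
        have h2 : ((j : ℤ)) + 1 = ((j + 1 : ℕ) : ℤ) := by push_cast; ring
        rw [h2] at *
        rw [← h2]
        exact sq_eq_of_nonneg lam (by omega)
      rw [Finset.sum_congr rfl this, Finset.sum_range_sub' (fun j : ℕ => g (j : ℤ)) M]
      rw [hzero (M : ℤ) (Or.inl le_rfl)]
      simp
    rw [hneg, hpos]; ring
  calc ∑ᶠ i : ℤ, ((boxCount lam i : ℤ) - (boxCount lam (i + 1) : ℤ)) ^ 2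
      = ∑ᶠ i : ℤ, f i := by
        apply finsum_congr; intro i; rw [hbc i, hbc (i + 1)]
    _ = 2 * g 0 := hmain
    _ = 2 * (boxCount lam 0 : ℤ) := by rw [hbc 0]
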